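/- Let I be an interval Markov chain, M a Markov chain satisfying I under the at-every-step semantics with degree 1 whose satisfaction relation is not a partial bijection (i.e., some state s̄ of I is related to at least two states of M), and α a state label. Then there exists a Markov chain M₁ satisfying I under the at-every-step semantics whose state set is a strict subset of the states of M, with P^{M₁}(◊α) ≤ P^{M}(◊α). Dually, there exists such an M₂ with strictly fewer states and P^{M₂}(◊α) ≥ P^{M}(◊α). -/

import Mathlib

open Classical

structure MC (S : Type) (A : Type) where
  s0 : S
  p : S → S → ℝ
  nonneg : ∀ s s', 0 ≤ p s s'
  sum_one : ∀ s, ∑ᶠ s', p s s' = 1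
  V : S → Set A

namespace MC

variable {S A : Type}

/-- Probability of a finite path (product of transition probabilities). -/
def pathProb (p : S → S → ℝ) : S → List S → ℝ
  | _, [] => 1
  | s, s' :: l => p s s' * pathProb p s' l

/-- `UntilPath φ ψ s l` : starting from `s`, the (nonempty) suffix `l` first reaches a
`ψ`-state at its last position, with `φ` holding at all strictly earlier positions after
the start. -/
inductive UntilPath (φ ψ : S → Prop) : S → List S → Prop
  | single {s s' : S} (h : ψ s') : UntilPath φ ψ s [s']
  | cons {s s' : S} {l : List S} (hψ : ¬ ψ s') (hφ : φ s') (h : UntilPath φ ψ s' l) :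
      UntilPath φ ψ s (s' :: l)

/-- `P_s(φ U ψ)` : first-passage sum over until-paths. -/
noncomputable def untilProb (p : S → S → ℝ) (φ ψ : S → Prop) (s : S) : ℝ :=
  ∑' l : {l : List S // UntilPath φ ψ s l}, pathProb p s l.1

/-- `P_s(◊ψ)` : probability of eventually reaching a `ψ`-state from `s`. -/
noncomputable def reachProb (p : S → S → ℝ) (ψ : S → Prop) (s : S) : ℝ :=
  if ψ s then 1 else untilProb p (fun _ => True) ψ s

/-- `P^M(◊α)` : probability of eventually reaching a state labeled `α` from the initial
state of `M`. -/
noncomputable def Preach (M : MC S A) (α : Set A) : ℝ :=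
  reachProb M.p (fun s => M.V s = α) M.s0

/-- Reachability via positive-probability transitions. -/
def Reaches (p : S → S → ℝ) : S → S → Prop :=
  Relation.ReflTransGen fun a b => 0 < p a b

end MC

/-- Interval Markov chain: each transition carries an interval `[Plo, Phi] ⊆ [0,1]`. -/
structure IMC (S : Type) (A : Type) where
  s0 : S
  Plo : S → S → ℝ
  Phi : S → S → ℝ
  V : S → Set A

/-- Once-and-for-all satisfaction `M ⊨ᵒ I`. -/
def SatO {S A : Type} (M : MC S A) (I : IMC S A) : Prop :=
  M.s0 = I.s0 ∧ M.V = I.V ∧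
    ∀ s, MC.Reaches M.p M.s0 s → ∀ s', M.p s s' ∈ Set.Icc (I.Plo s s') (I.Phi s s')

/-- `R` is an at-every-step satisfaction relation between `M` and `I`. -/
def IsSatRel {T S A : Type} (M : MC T A) (I : IMC S A) (R : T → S → Prop) : Prop :=
  R M.s0 I.s0 ∧
    ∀ t s, R t s → M.V t = I.V s ∧
      ∃ δ : T → S → ℝ,
        (∀ t' s', 0 ≤ δ t' s') ∧
        (∀ t', 0 < M.p t t' → ∑ᶠ s', δ t' s' = 1) ∧
        (∀ s', (∑ᶠ t', M.p t t' * δ t' s') ∈ Set.Icc (I.Plo s s') (I.Phi s s')) ∧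
        (∀ t' s', 0 < δ t' s' → R t' s')

/-- At-every-step satisfaction `M ⊨ᵃ I`. -/
def SatA {T S A : Type} (M : MC T A) (I : IMC S A) : Prop :=
  ∃ R, IsSatRel M I R

/-- `M` satisfies `I` with degree `n`. -/
def SatADeg {T S A : Type} (n : ℕ) (M : MC T A) (I : IMC S A) : Prop :=
  ∃ R, IsSatRel M I R ∧ ∀ t, {s | R t s}.ncard ≤ n

/-- Combined transition function on the disjoint union of two Markov chains. -/
def sumP {S T A : Type} (M : MC S A) (N : MC T A) : S ⊕ T → S ⊕ T → ℝ
  | .inl a, .inl b => M.p a b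
  | .inr a, .inr b => N.p a b
  | _, _ => 0

/-- Combined labelling on the disjoint union. -/
def sumV {S T A : Type} (M : MC S A) (N : MC T A) : S ⊕ T → Set A :=
  Sum.elim M.V N.V

/-- Probabilistic bisimilarity of two Markov chains. -/
def Bisimilar {S T A : Type} (M : MC S A) (N : MC T A) : Prop :=
  ∃ B : (S ⊕ T) → (S ⊕ T) → Prop,
    Equivalence B ∧ B (Sum.inl M.s0) (Sum.inr N.s0) ∧
    ∀ a b, B a b → sumV M N a = sumV M N b ∧
      ∀ C : Set (S ⊕ T), (∀ x y, B x y → (x ∈ C ↔ y ∈ C)) →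
        (∑ᶠ c ∈ C, sumP M N a c) = ∑ᶠ c ∈ C, sumP M N b c


namespace Stmt14Aux
open MC

set_option linter.unusedSectionVars false
variable {σ : Type} [Fintype σ] [Inhabited σ]

lemma pathProb_nonneg (p : σ → σ → ℝ) (hp : ∀ a b, 0 ≤ p a b) :
    ∀ (l : List σ) (s : σ), 0 ≤ pathProb p s l := by
  intro l
  induction l with
  | nil => intro s; simp [pathProb]
  | cons a l ih => intro s; exact mul_nonneg (hp s a) (ih a)

lemma until_ne_nil {φ ψ : σ → Prop} {s : σ} {l : List σ}
    (h : UntilPath φ ψ s l) : l ≠ [] := by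
  cases h <;> simp

lemma until_cons {φ ψ : σ → Prop} {s s' : σ} {l : List σ}
    (h : UntilPath φ ψ s (s' :: l)) :
    (ψ s' ∧ l = []) ∨ (¬ ψ s' ∧ φ s' ∧ UntilPath φ ψ s' l) := by
  cases h with
  | single h => exact Or.inl ⟨h, rfl⟩
  | cons hψ hφ h => exact Or.inr ⟨hψ, hφ, h⟩

/-- The key partial-sum bound. -/
lemma key_bound (p : σ → σ → ℝ) (ψ : σ → Prop) (hp : ∀ a b, 0 ≤ p a b)
    (z : σ → ℝ) (hz0 : ∀ s, 0 ≤ z s) (hz1 : ∀ s, ψ s → 1 ≤ z s)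
    (hzstep : ∀ s, ¬ ψ s → ∑ s', p s s' * z s' ≤ z s) :
    ∀ (n : ℕ) (s : σ) (L : Finset (List σ)),
      (∀ l ∈ L, UntilPath (fun _ => True) ψ s l ∧ l.length ≤ n) →
      ∑ l ∈ L, pathProb p s l ≤ ∑ s', p s s' * z s' := by
  intro n
  induction n with
  | zero =>
    intro s L hL
    have : L = ∅ := by
      apply Finset.eq_empty_of_forall_notMem
      intro l hl
      have := hL l hl
      exact until_ne_nil this.1 (List.length_eq_zero_iff.mp (Nat.le_zero.mp this.2))
    rw [this]
    simp only [Finset.sum_empty]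
    exact Finset.sum_nonneg fun s' _ => mul_nonneg (hp s s') (hz0 s')
  | succ n ih =>
    intro s L hL
    rw [← Finset.sum_fiberwise_of_maps_to (g := fun l : List σ => l.headI)
      (fun i _ => Finset.mem_univ _) (fun l => pathProb p s l)]
    apply Finset.sum_le_sum
    intro s' _
    -- each l in the fiber has the form s' :: l.tail
    have hform : ∀ l ∈ L.filter (fun l => l.headI = s'), l = s' :: l.tail := by
      intro l hl
      rw [Finset.mem_filter] at hl
      obtain ⟨hlL, hhead⟩ := hl
      have hne := until_ne_nil (hL l hlL).1
      cases l with
      | nil => exact absurd rfl hne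
      | cons a t => simp at hhead; subst hhead; rfl
    have hsum : ∑ l ∈ L.filter (fun l => l.headI = s'), pathProb p s l
        = p s s' * ∑ l ∈ (L.filter (fun l => l.headI = s')).image List.tail,
            pathProb p s' l := by
      rw [Finset.mul_sum, Finset.sum_image ?_]
      · apply Finset.sum_congr rfl
        intro l hl
        conv_lhs => rw [hform l hl]
        rfl
      · intro l₁ h₁ l₂ h₂ htl
        rw [hform l₁ h₁, hform l₂ h₂, htl]
    rw [hsum]
    have htail : ∑ l ∈ (L.filter (fun l => l.headI = s')).image List.tail,
        pathProb p s' l ≤ z s' := by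
      by_cases hψ : ψ s'
      · -- all tails are []
        have hsub : (L.filter (fun l => l.headI = s')).image List.tail ⊆ {[]} := by
          intro l' hl'
          rw [Finset.mem_image] at hl'
          obtain ⟨l, hl, rfl⟩ := hl'
          have h1 := (hL l (Finset.mem_filter.mp hl).1).1
          rw [hform l hl] at h1
          rcases until_cons h1 with ⟨_, h⟩ | ⟨h, _⟩
          · simp [h]
          · exact absurd hψ h
        calc ∑ l ∈ (L.filter (fun l => l.headI = s')).image List.tail, pathProb p s' l
            ≤ ∑ l ∈ ({[]} : Finset (List σ)), pathProb p s' l := by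
              apply Finset.sum_le_sum_of_subset_of_nonneg hsub
              intro l _ _; exact pathProb_nonneg p hp l s'
          _ = 1 := by simp [pathProb]
          _ ≤ z s' := hz1 s' hψ
      · calc ∑ l ∈ (L.filter (fun l => l.headI = s')).image List.tail, pathProb p s' l
            ≤ ∑ s'', p s' s'' * z s'' := by
              apply ih s'
              intro l' hl'
              rw [Finset.mem_image] at hl'
              obtain ⟨l, hl, rfl⟩ := hl'
              obtain ⟨hu, hlen⟩ := hL l (Finset.mem_filter.mp hl).1
              rw [hform l hl] at hu hlen
              rcases until_cons hu with ⟨h, _⟩ | ⟨_, _, h⟩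
              · exact absurd h hψ
              · exact ⟨h, by rw [List.length_cons] at hlen; omega⟩
          _ ≤ z s' := hzstep s' hψ
    exact mul_le_mul_of_nonneg_left htail (hp s s')

end Stmt14Aux

namespace Stmt14Aux
open MC

section Disc
variable {σ : Type} [Fintype σ] [Inhabited σ]

/-- Discounted until-probability. -/
noncomputable def dU (p : σ → σ → ℝ) (ψ : σ → Prop) (γ : ℝ) (s : σ) : ℝ :=
  ∑' l : {l : List σ // UntilPath (fun _ => True) ψ s l},
    γ ^ l.1.length * pathProb p s l.1

/-- Discounted reach-probability. -/
noncomputable def dR (p : σ → σ → ℝ) (ψ : σ → Prop) (γ : ℝ) (s : σ) : ℝ :=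
  if ψ s then 1 else dU p ψ γ s

variable (p : σ → σ → ℝ) (ψ : σ → Prop)

lemma partial_le_one (hp : ∀ a b, 0 ≤ p a b) (hs : ∀ a, ∑ b, p a b ≤ 1)
    {γ : ℝ} (hγ0 : 0 ≤ γ) (hγ1 : γ ≤ 1) (s : σ)
    (u : Finset {l : List σ // UntilPath (fun _ => True) ψ s l}) :
    ∑ l ∈ u, γ ^ l.1.length * pathProb p s l.1 ≤ 1 := by
  have h1 : ∑ l ∈ u, γ ^ l.1.length * pathProb p s l.1
      ≤ ∑ l ∈ u, pathProb p s l.1 := by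
    apply Finset.sum_le_sum
    intro l _
    exact mul_le_of_le_one_left (pathProb_nonneg p hp l.1 s) (pow_le_one₀ hγ0 hγ1)
  have h2 : ∑ l ∈ u, pathProb p s l.1 = ∑ l ∈ u.image Subtype.val, pathProb p s l := by
    rw [Finset.sum_image]
    intro x _ y _ h; exact Subtype.ext h
  have h3 : ∑ l ∈ u.image Subtype.val, pathProb p s l ≤ ∑ s', p s s' * (1:ℝ) := by
    apply key_bound p ψ hp (fun _ => 1) (fun _ => zero_le_one) (fun _ _ => le_refl 1)
      (fun s' _ => by simpa using hs s') ((u.image Subtype.val).sup List.length) s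
    intro l hl
    refine ⟨?_, Finset.le_sup hl⟩
    obtain ⟨⟨l', hl'⟩, _, rfl⟩ := Finset.mem_image.mp hl
    exact hl'
  calc ∑ l ∈ u, γ ^ l.1.length * pathProb p s l.1 ≤ ∑ l ∈ u.image Subtype.val, pathProb p s l := by
        rw [← h2]; exact h1
    _ ≤ ∑ s', p s s' * (1:ℝ) := h3
    _ ≤ 1 := by simpa using hs s

lemma summable_up (hp : ∀ a b, 0 ≤ p a b) (hs : ∀ a, ∑ b, p a b ≤ 1)
    {γ : ℝ} (hγ0 : 0 ≤ γ) (hγ1 : γ ≤ 1) (s : σ) :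
    Summable (fun l : {l : List σ // UntilPath (fun _ => True) ψ s l} =>
      γ ^ l.1.length * pathProb p s l.1) := by
  apply summable_of_sum_le (c := 1)
  · intro l
    exact mul_nonneg (pow_nonneg hγ0 _) (pathProb_nonneg p hp l.1 s)
  · exact partial_le_one p ψ hp hs hγ0 hγ1 s

lemma dU_nonneg (hp : ∀ a b, 0 ≤ p a b) {γ : ℝ} (hγ0 : 0 ≤ γ) (s : σ) :
    0 ≤ dU p ψ γ s :=
  tsum_nonneg fun l => mul_nonneg (pow_nonneg hγ0 _) (pathProb_nonneg p hp l.1 s)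

lemma dU_le_one (hp : ∀ a b, 0 ≤ p a b) (hs : ∀ a, ∑ b, p a b ≤ 1)
    {γ : ℝ} (hγ0 : 0 ≤ γ) (hγ1 : γ ≤ 1) (s : σ) :
    dU p ψ γ s ≤ 1 :=
  Summable.tsum_le_of_sum_le (summable_up p ψ hp hs hγ0 hγ1 s) (partial_le_one p ψ hp hs hγ0 hγ1 s)

lemma dR_nonneg (hp : ∀ a b, 0 ≤ p a b) {γ : ℝ} (hγ0 : 0 ≤ γ) (s : σ) :
    0 ≤ dR p ψ γ s := by
  rw [dR]; split
  · exact zero_le_one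
  · exact dU_nonneg p ψ hp hγ0 s

lemma dR_le_one (hp : ∀ a b, 0 ≤ p a b) (hs : ∀ a, ∑ b, p a b ≤ 1)
    {γ : ℝ} (hγ0 : 0 ≤ γ) (hγ1 : γ ≤ 1) (s : σ) :
    dR p ψ γ s ≤ 1 := by
  rw [dR]; split
  · exact le_refl 1
  · exact dU_le_one p ψ hp hs hγ0 hγ1 s

/-- Unfolding equivalence: an until-path is a head together with an until-path condition
on the whole cons. -/
def unfoldEquiv (s : σ) :
    {l : List σ // UntilPath (fun _ => True) ψ s l} ≃
      (Σ s' : σ, {l : List σ // UntilPath (fun _ => True) ψ s (s' :: l)}) where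
  toFun x := ⟨x.1.headI, x.1.tail, by
    obtain ⟨l, h⟩ := x
    cases l with
    | nil => exact absurd rfl (until_ne_nil h)
    | cons a t => exact h⟩
  invFun y := ⟨y.1 :: y.2.1, y.2.2⟩
  left_inv := by
    rintro ⟨l, h⟩
    cases l with
    | nil => exact absurd rfl (until_ne_nil h)
    | cons a t => rfl
  right_inv := by rintro ⟨s', l, h⟩; rfl

lemma dU_unfold (hp : ∀ a b, 0 ≤ p a b) (hs : ∀ a, ∑ b, p a b ≤ 1)
    {γ : ℝ} (hγ0 : 0 ≤ γ) (hγ1 : γ ≤ 1) (s : σ) :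
    dU p ψ γ s = γ * ∑ s', p s s' * dR p ψ γ s' := by
  classical
  set f : {l : List σ // UntilPath (fun _ => True) ψ s l} → ℝ :=
    fun l => γ ^ l.1.length * pathProb p s l.1 with hf
  have hsum : Summable f := summable_up p ψ hp hs hγ0 hγ1 s
  have hsig : Summable (fun y : (Σ s' : σ, {l : List σ //
      UntilPath (fun _ => True) ψ s (s' :: l)}) => f ((unfoldEquiv ψ s).symm y)) :=
    ((unfoldEquiv ψ s).symm.summable_iff).mpr hsum
  have h0 : dU p ψ γ s = ∑' y : (Σ s' : σ, {l : List σ //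
      UntilPath (fun _ => True) ψ s (s' :: l)}), f ((unfoldEquiv ψ s).symm y) :=
    ((unfoldEquiv ψ s).symm.tsum_eq f).symm
  rw [h0, Summable.tsum_sigma (f := fun y => f ((unfoldEquiv ψ s).symm y)) hsig, tsum_fintype, Finset.mul_sum]
  apply Finset.sum_congr rfl
  intro s' _
  have hterm : ∀ l : {l : List σ // UntilPath (fun _ => True) ψ s (s' :: l)},
      f ((unfoldEquiv ψ s).symm ⟨s', l⟩)
        = (γ * p s s') * (γ ^ l.1.length * pathProb p s' l.1) := by
    intro l
    show γ ^ (s' :: l.1).length * pathProb p s (s' :: l.1) = _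
    rw [List.length_cons, pathProb]
    ring
  rw [tsum_congr hterm, tsum_mul_left]
  by_cases hψ : ψ s'
  · -- the index type is a singleton {[]}
    have huniq : ∀ b : {l : List σ // UntilPath (fun _ => True) ψ s (s' :: l)},
        b = ⟨[], UntilPath.single hψ⟩ := by
      rintro ⟨l, hl⟩
      rcases until_cons hl with ⟨_, rfl⟩ | ⟨h, _⟩
      · rfl
      · exact absurd hψ h
    rw [tsum_eq_single (⟨[], UntilPath.single hψ⟩ :
        {l : List σ // UntilPath (fun _ => True) ψ s (s' :: l)})
      (fun b hb => absurd (huniq b) hb)]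
    rw [dR, if_pos hψ]
    simp [pathProb]
  · -- the index type is the until-paths from s'
    have hiff : ∀ l : List σ, UntilPath (fun _ => True) ψ s (s' :: l)
        ↔ UntilPath (fun _ => True) ψ s' l := by
      intro l
      constructor
      · intro h
        rcases until_cons h with ⟨h', _⟩ | ⟨_, _, h'⟩
        · exact absurd h' hψ
        · exact h'
      · intro h
        exact UntilPath.cons hψ trivial h
    have : ∑' l : {l : List σ // UntilPath (fun _ => True) ψ s (s' :: l)},
        γ ^ l.1.length * pathProb p s' l.1 = dU p ψ γ s' := by
      rw [dU, ← (Equiv.subtypeEquivRight hiff).tsum_eq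
        (fun l => γ ^ l.1.length * pathProb p s' l.1)]
      apply tsum_congr
      intro l
      rw [Equiv.subtypeEquivRight_apply]
    rw [this, dR, if_neg hψ]
    ring

lemma dR_unfold (hp : ∀ a b, 0 ≤ p a b) (hs : ∀ a, ∑ b, p a b ≤ 1)
    {γ : ℝ} (hγ0 : 0 ≤ γ) (hγ1 : γ ≤ 1) {s : σ} (hψ : ¬ ψ s) :
    dR p ψ γ s = γ * ∑ s', p s s' * dR p ψ γ s' := by
  rw [dR, if_neg hψ]
  exact dU_unfold p ψ hp hs hγ0 hγ1 s

/-- Leastness of the (undiscounted) reach probability. -/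
lemma dR_le (hp : ∀ a b, 0 ≤ p a b) (hs : ∀ a, ∑ b, p a b ≤ 1)
    (z : σ → ℝ) (hz0 : ∀ s, 0 ≤ z s) (hz1 : ∀ s, ψ s → 1 ≤ z s)
    (hzstep : ∀ s, ¬ ψ s → ∑ s', p s s' * z s' ≤ z s) (s : σ) :
    dR p ψ 1 s ≤ z s := by
  rw [dR]; split
  · exact hz1 s ‹_›
  · apply Summable.tsum_le_of_sum_le (summable_up p ψ hp hs zero_le_one le_rfl s)
    intro u
    have h2 : ∑ l ∈ u, (1:ℝ) ^ l.1.length * pathProb p s l.1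
        = ∑ l ∈ u.image Subtype.val, pathProb p s l := by
      rw [Finset.sum_image (fun x _ y _ h => Subtype.ext h)]
      apply Finset.sum_congr rfl
      intro l _
      rw [one_pow, one_mul]
    rw [h2]
    calc ∑ l ∈ u.image Subtype.val, pathProb p s l ≤ ∑ s', p s s' * z s' := by
          apply key_bound p ψ hp z hz0 hz1 hzstep ((u.image Subtype.val).sup List.length) s
          intro l hl
          refine ⟨?_, Finset.le_sup hl⟩
          obtain ⟨⟨l', hl'⟩, _, rfl⟩ := Finset.mem_image.mp hl
          exact hl'
      _ ≤ z s := hzstep s ‹_›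

end Disc
end Stmt14Aux

namespace Stmt14Aux
open MC Filter

section Disc2
variable {σ : Type} [Fintype σ] [Inhabited σ]
variable (p : σ → σ → ℝ) (ψ : σ → Prop)

/-- Comparison: a (discounted, γ<1) subsolution is below a supersolution. -/
lemma sub_le_fixed (hp : ∀ a b, 0 ≤ p a b) (hs : ∀ a, ∑ b, p a b ≤ 1)
    {γ : ℝ} (hγ0 : 0 ≤ γ) (hγ1 : γ < 1) (x y : σ → ℝ)
    (hx1 : ∀ s, ψ s → x s ≤ 1)
    (hx2 : ∀ s, ¬ ψ s → x s ≤ γ * ∑ s', p s s' * x s')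
    (hy1 : ∀ s, ψ s → 1 ≤ y s)
    (hy2 : ∀ s, ¬ ψ s → γ * ∑ s', p s s' * y s' ≤ y s) :
    ∀ s, x s ≤ y s := by
  by_contra hcon
  push_neg at hcon
  obtain ⟨s₀, hs₀⟩ := hcon
  obtain ⟨sm, _, hsm⟩ := Finset.exists_max_image Finset.univ (fun s => x s - y s)
    ⟨s₀, Finset.mem_univ s₀⟩
  set Δ := x sm - y sm with hΔ
  have hΔpos : 0 < Δ := lt_of_lt_of_le (sub_pos.mpr hs₀) (hsm s₀ (Finset.mem_univ s₀))
  by_cases hψ : ψ sm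
  · have := sub_nonpos.mpr (le_trans (hx1 sm hψ) (hy1 sm hψ))
    exact absurd hΔpos (by rw [hΔ]; linarith)
  · have hstep : Δ ≤ γ * Δ := by
      have h1 : x sm - y sm ≤ γ * (∑ s', p sm s' * x s') - γ * (∑ s', p sm s' * y s') :=
        sub_le_sub (hx2 sm hψ) (hy2 sm hψ)
      have h2 : γ * (∑ s', p sm s' * x s') - γ * (∑ s', p sm s' * y s')
          = γ * ∑ s', p sm s' * (x s' - y s') := by
        rw [← mul_sub, ← Finset.sum_sub_distrib]
        congr 1
        apply Finset.sum_congr rfl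
        intro s' _
        ring
      have h3 : ∑ s', p sm s' * (x s' - y s') ≤ ∑ s', p sm s' * Δ := by
        apply Finset.sum_le_sum
        intro s' _
        exact mul_le_mul_of_nonneg_left (hsm s' (Finset.mem_univ s')) (hp sm s')
      have h4 : ∑ s', p sm s' * Δ ≤ Δ := by
        rw [← Finset.sum_mul]
        calc (∑ s', p sm s') * Δ ≤ 1 * Δ :=
              mul_le_mul_of_nonneg_right (hs sm) (le_of_lt hΔpos)
          _ = Δ := one_mul Δ
      calc Δ ≤ γ * ∑ s', p sm s' * (x s' - y s') := by rw [← h2]; exact h1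
        _ ≤ γ * Δ := mul_le_mul_of_nonneg_left (le_trans h3 h4) hγ0
    nlinarith

lemma dU_mono (hp : ∀ a b, 0 ≤ p a b) (hs : ∀ a, ∑ b, p a b ≤ 1)
    {γ γ' : ℝ} (h0 : 0 ≤ γ) (h : γ ≤ γ') (h1 : γ' ≤ 1) (s : σ) :
    dU p ψ γ s ≤ dU p ψ γ' s := by
  apply Summable.tsum_le_tsum _ (summable_up p ψ hp hs h0 (le_trans h h1) s)
    (summable_up p ψ hp hs (le_trans h0 h) h1 s)
  intro l
  exact mul_le_mul_of_nonneg_right (pow_le_pow_left₀ h0 h _)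
    (pathProb_nonneg p hp l.1 s)

lemma dR_mono (hp : ∀ a b, 0 ≤ p a b) (hs : ∀ a, ∑ b, p a b ≤ 1)
    {γ γ' : ℝ} (h0 : 0 ≤ γ) (h : γ ≤ γ') (h1 : γ' ≤ 1) (s : σ) :
    dR p ψ γ s ≤ dR p ψ γ' s := by
  rw [dR, dR]; split
  · exact le_refl 1
  · exact dU_mono p ψ hp hs h0 h h1 s

end Disc2

/-- The sequence of discount factors tending to `1`. -/
noncomputable def γseq (k : ℕ) : ℝ := 1 - ((k : ℝ) + 2)⁻¹

lemma γseq_nonneg (k : ℕ) : 0 ≤ γseq k := by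
  have h2 : (0:ℝ) < (k : ℝ) + 2 := by positivity
  have : ((k : ℝ) + 2)⁻¹ ≤ 1 := by
    rw [inv_le_one_iff₀]; right; linarith
  simp only [γseq]; linarith

lemma γseq_lt_one (k : ℕ) : γseq k < 1 := by
  have h2 : (0:ℝ) < ((k : ℝ) + 2)⁻¹ := by positivity
  simp only [γseq]; linarith

lemma γseq_mono : Monotone γseq := by
  intro a b hab
  simp only [γseq]
  have h2 : (0:ℝ) < (a : ℝ) + 2 := by positivity
  have : ((b : ℝ) + 2)⁻¹ ≤ ((a : ℝ) + 2)⁻¹ := by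
    apply inv_anti₀ h2
    have : (a:ℝ) ≤ (b:ℝ) := Nat.cast_le.mpr hab
    linarith
  linarith

lemma γseq_tendsto : Tendsto γseq atTop (nhds 1) := by
  have h : Tendsto (fun k : ℕ => ((k : ℝ) + 2)⁻¹) atTop (nhds 0) := by
    apply Filter.Tendsto.comp tendsto_inv_atTop_zero
    apply tendsto_atTop_add_const_right
    exact tendsto_natCast_atTop_atTop
  have := (tendsto_const_nhds : Tendsto (fun _ : ℕ => (1:ℝ)) atTop (nhds 1)).sub h
  simpa [show γseq = fun k : ℕ => 1 - ((k : ℝ) + 2)⁻¹ from rfl] using this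

section Disc3
variable {σ : Type} [Fintype σ] [Inhabited σ]
variable (p : σ → σ → ℝ) (ψ : σ → Prop)

lemma dR_tendsto (hp : ∀ a b, 0 ≤ p a b) (hs : ∀ a, ∑ b, p a b ≤ 1) (s : σ) :
    Tendsto (fun k => dR p ψ (γseq k) s) atTop (nhds (dR p ψ 1 s)) := by
  by_cases hψ : ψ s
  · have : ∀ k, dR p ψ (γseq k) s = dR p ψ 1 s := by
      intro k; rw [dR, dR, if_pos hψ, if_pos hψ]
    simp only [this]
    exact tendsto_const_nhds
  · rw [Metric.tendsto_atTop]
    intro ε hε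
    set L := dR p ψ 1 s with hL
    -- find a finite subfamily with sum close to L
    have hsumm := summable_up p ψ hp hs zero_le_one le_rfl s
    have hHS : HasSum (fun l : {l : List σ // UntilPath (fun _ => True) ψ s l} =>
        (1:ℝ) ^ l.1.length * pathProb p s l.1) (dU p ψ 1 s) := hsumm.hasSum
    have hL' : dR p ψ 1 s = dU p ψ 1 s := by rw [dR, if_neg hψ]
    obtain ⟨F₀, hF₀⟩ : ∃ F₀ : Finset {l : List σ // UntilPath (fun _ => True) ψ s l},
        |(∑ l ∈ F₀, (1:ℝ) ^ l.1.length * pathProb p s l.1) - dU p ψ 1 s| < ε / 4 := by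
      have := Metric.tendsto_nhds.mp hHS (ε / 4) (by linarith)
      rcases (Filter.eventually_atTop).mp this with ⟨F₀, hF⟩
      exact ⟨F₀, hF F₀ le_rfl⟩
    -- finite sums converge as γ → 1
    have htend : Tendsto (fun k => ∑ l ∈ F₀, (γseq k) ^ l.1.length * pathProb p s l.1)
        atTop (nhds (∑ l ∈ F₀, (1:ℝ) ^ l.1.length * pathProb p s l.1)) := by
      apply tendsto_finset_sum
      intro l _
      exact (γseq_tendsto.pow l.1.length).mul_const _
    obtain ⟨K, hK⟩ := (Filter.eventually_atTop).mp
      (Metric.tendsto_nhds.mp htend (ε / 4) (by linarith))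
    refine ⟨K, fun k hk => ?_⟩
    have h1 : dR p ψ (γseq k) s ≤ L := by
      rw [hL]
      exact dR_mono p ψ hp hs (γseq_nonneg k) (le_of_lt (γseq_lt_one k)) le_rfl s
    have h2 : ∑ l ∈ F₀, (γseq k) ^ l.1.length * pathProb p s l.1 ≤ dR p ψ (γseq k) s := by
      rw [dR, if_neg hψ]
      apply Summable.sum_le_tsum F₀ _ (summable_up p ψ hp hs (γseq_nonneg k)
        (le_of_lt (γseq_lt_one k)) s)
      intro l _
      exact mul_nonneg (pow_nonneg (γseq_nonneg k) _) (pathProb_nonneg p hp l.1 s)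
    have h3 := hK k hk
    have hLd : L = dU p ψ 1 s := by rw [hL, dR, if_neg hψ]
    rw [Real.dist_eq, abs_lt] at h3
    rw [abs_lt] at hF₀
    rw [Real.dist_eq, abs_lt]
    constructor <;> linarith [h3.1, h3.2, hF₀.1, hF₀.2, h1, h2]

end Disc3

/-- Limit of a frequent inequality. -/
lemma freq_le {f g : ℕ → ℝ} {a b : ℝ}
    (hf : Tendsto f atTop (nhds a)) (hg : Tendsto g atTop (nhds b))
    (h : ∃ᶠ k in atTop, f k ≤ g k) : a ≤ b := by
  by_contra hab
  push_neg at hab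
  set c := (a + b) / 2 with hc
  have h1 : ∀ᶠ k in atTop, c < f k := hf.eventually (eventually_gt_nhds (by rw [hc]; linarith))
  have h2 : ∀ᶠ k in atTop, g k < c := hg.eventually (eventually_lt_nhds (by rw [hc]; linarith))
  obtain ⟨k, hk1, hk2, hk3⟩ := (h.and_eventually (h1.and h2)).exists
  linarith

end Stmt14Aux

namespace Stmt14Aux
open MC

section Merge
variable {T A : Type} [Fintype T]

/-- The state set with `t₂` removed. -/
def Uset (t₂ : T) : Set T := {t | t ≠ t₂}

noncomputable instance USetFintype (t₂ : T) : Fintype ↥(Uset t₂) :=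
  Fintype.ofFinite _

lemma mem_Uset {t t₂ : T} : t ∈ Uset t₂ ↔ t ≠ t₂ := Iff.rfl

variable (M : MC T A) (t₁ t₂ : T)

/-- Row `d` of `M` with all mass into `{t₁, t₂}` redirected onto (the image of) `t₁`. -/
noncomputable def dred (d : T) (u' : ↥(Uset t₂)) : ℝ :=
  if u'.1 = t₁ then M.p d t₁ + M.p d t₂ else M.p d u'.1

variable (hne : t₁ ≠ t₂)

/-- Projection collapsing `t₂` onto `t₁`. -/
noncomputable def πmap (t : T) : ↥(Uset t₂) :=
  if h : t = t₂ then ⟨t₁, hne⟩ else ⟨t, h⟩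

lemma πmap_ne {t : T} (h : t ≠ t₂) : πmap t₁ t₂ hne t = ⟨t, h⟩ := dif_neg h

lemma πmap_t₂ : πmap t₁ t₂ hne t₂ = ⟨t₁, hne⟩ := dif_pos rfl

lemma πmap_t₁ : πmap t₁ t₂ hne t₁ = ⟨t₁, hne⟩ := dif_neg hne

/-- Decomposition of a sum over the reduced state space. -/
lemma Usum_decomp (d : T) (x : ↥(Uset t₂) → ℝ) :
    ∑ u' : ↥(Uset t₂), dred M t₁ t₂ d u' * x u'
      = (M.p d t₁ + M.p d t₂) * x ⟨t₁, hne⟩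
        + ∑ t' ∈ (Finset.univ.erase t₂).erase t₁,
            M.p d t' * x (πmap t₁ t₂ hne t') := by
  classical
  have h1 : ∑ u' : ↥(Uset t₂), dred M t₁ t₂ d u' * x u'
      = ∑ t' ∈ Finset.univ.erase t₂,
          (if t' = t₁ then (M.p d t₁ + M.p d t₂) * x ⟨t₁, hne⟩
           else M.p d t' * x (πmap t₁ t₂ hne t')) := by
    rw [Finset.sum_subtype (p := fun t => t ∈ Uset t₂) _
      (fun x => by simp [mem_Uset, Finset.mem_erase])]
    apply Finset.sum_congr rfl
    rintro ⟨t', ht'⟩ _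
    by_cases h : t' = t₁
    · subst h
      rw [if_pos rfl, dred, if_pos rfl]
    · rw [if_neg h, dred, if_neg h, πmap_ne t₁ t₂ hne ht']
  rw [h1, ← Finset.sum_erase_add _ _
    (Finset.mem_erase.mpr ⟨hne, Finset.mem_univ t₁⟩), if_pos rfl]
  rw [add_comm ((M.p d t₁ + M.p d t₂) * x ⟨t₁, hne⟩)]
  congr 1
  apply Finset.sum_congr rfl
  intro t' ht'
  rw [if_neg (Finset.mem_erase.mp ht').1]

include hne in
lemma Tsum_decomp (d : T) (w : T → ℝ) :
    ∑ t' : T, M.p d t' * w t'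
      = M.p d t₁ * w t₁ + M.p d t₂ * w t₂
        + ∑ t' ∈ (Finset.univ.erase t₂).erase t₁, M.p d t' * w t' := by
  classical
  rw [← Finset.sum_erase_add Finset.univ _ (Finset.mem_univ t₂),
    ← Finset.sum_erase_add (Finset.univ.erase t₂) _
      (Finset.mem_erase.mpr ⟨hne, Finset.mem_univ t₁⟩)]
  ring

include hne in
lemma dred_rowsum (hMs : ∀ t, ∑ t' : T, M.p t t' = 1) (d : T) :
    ∑ u' : ↥(Uset t₂), dred M t₁ t₂ d u' = 1 := by
  have h := Usum_decomp M t₁ t₂ hne d (fun _ => 1)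
  have h2 := Tsum_decomp M t₁ t₂ hne d (fun _ => 1)
  simp only [mul_one] at h h2
  rw [hMs d] at h2
  rw [h]
  linarith

/-- The merged Markov chain: state `t₂` is deleted, all transitions into `{t₁,t₂}` are
redirected into `t₁`, and the outgoing row of the merged state is the (redirected)
row of `tsel`. -/
noncomputable def mergedMC (tsel : T) : MC (↥(Uset t₂)) A where
  s0 := πmap t₁ t₂ hne M.s0
  p u u' := dred M t₁ t₂ (if u.1 = t₁ then tsel else u.1) u'
  nonneg u u' := by
    simp only [dred]
    split
    · exact add_nonneg (M.nonneg _ _) (M.nonneg _ _)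
    · exact M.nonneg _ _
  sum_one u := by
    rw [finsum_eq_sum_of_fintype]
    apply dred_rowsum M t₁ t₂ hne
    intro t
    rw [← finsum_eq_sum_of_fintype]
    exact M.sum_one t
  V u := M.V u.1

lemma merged_p_ne (tsel : T) (u u' : ↥(Uset t₂)) (h : u.1 ≠ t₁) :
    (mergedMC M t₁ t₂ hne tsel).p u u' = dred M t₁ t₂ u.1 u' := by
  show dred M t₁ t₂ (if u.1 = t₁ then tsel else u.1) u' = _
  rw [if_neg h]

lemma merged_p_m (tsel : T) (u' : ↥(Uset t₂)) :
    (mergedMC M t₁ t₂ hne tsel).p ⟨t₁, hne⟩ u' = dred M t₁ t₂ tsel u' := by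
  show dred M t₁ t₂ (if t₁ = t₁ then tsel else t₁) u' = _
  rw [if_pos rfl]

end Merge
end Stmt14Aux

namespace Stmt14Aux
open MC

set_option maxHeartbeats 1000000 in
lemma merged_sat {T S A : Type} [Fintype T] [Finite S]
    (M : MC T A) (I : IMC S A) (R : T → S → Prop)
    (hsat : IsSatRel M I R) (hdeg1 : ∀ t, {s | R t s}.ncard ≤ 1)
    (sbar : S) (t₁ t₂ : T) (hne : t₁ ≠ t₂) (h1 : R t₁ sbar) (h2 : R t₂ sbar)
    (tsel : T) (hsel : tsel = t₁ ∨ tsel = t₂) :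
    IsSatRel (mergedMC M t₁ t₂ hne tsel) I (fun u s => R u.1 s) := by
  classical
  haveI := Fintype.ofFinite S
  have huniq : ∀ t s s', R t s → R t s' → s = s' := fun t s s' hs hs' =>
    (Set.ncard_le_one (Set.toFinite _)).mp (hdeg1 t) s hs s' hs'
  have hRsel : R tsel sbar := by rcases hsel with rfl | rfl; exacts [h1, h2]
  constructor
  · -- initial states related
    show R (πmap t₁ t₂ hne M.s0).1 I.s0
    by_cases h : M.s0 = t₂
    · rw [h, πmap_t₂]
      have hR2 : R t₂ I.s0 := h ▸ hsat.1
      have hs0 : I.s0 = sbar := huniq t₂ _ _ hR2 h2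
      exact hs0 ▸ h1
    · rw [πmap_ne t₁ t₂ hne h]
      exact hsat.1
  · intro u s hR
    have hRsrc : R (if u.1 = t₁ then tsel else u.1) s := by
      by_cases h : u.1 = t₁
      · rw [if_pos h]
        have hs : s = sbar := huniq t₁ s sbar (h ▸ hR) h1
        rw [hs]; exact hRsel
      · rw [if_neg h]; exact hR
    obtain ⟨hV', δ, hδ0, hδ1, hδint, hδsupp⟩ :=
      hsat.2 (if u.1 = t₁ then tsel else u.1) s hRsrc
    set d : T := if u.1 = t₁ then tsel else u.1 with hd
    have hpu : ∀ u', (mergedMC M t₁ t₂ hne tsel).p u u' = dred M t₁ t₂ d u' := by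
      intro u'
      show dred M t₁ t₂ (if u.1 = t₁ then tsel else u.1) u' = _
      rw [← hd]
    have hδsum : ∀ t', 0 < M.p d t' → ∑ s' : S, δ t' s' = 1 := by
      intro t' h
      rw [← finsum_eq_sum_of_fintype]
      exact hδ1 t' h
    classical
    refine ⟨(hsat.2 u.1 s hR).1, fun u' s' =>
      if u'.1 = t₁ then
        (if 0 < M.p d t₁ + M.p d t₂ then
          (M.p d t₁ * δ t₁ s' + M.p d t₂ * δ t₂ s') / (M.p d t₁ + M.p d t₂)
         else δ t₁ s')
      else δ u'.1 s', ?_, ?_, ?_, ?_⟩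
    · -- nonnegativity
      intro u' s'
      dsimp only
      split
      · split
        · apply div_nonneg _ (by linarith [M.nonneg d t₁, M.nonneg d t₂])
          exact add_nonneg (mul_nonneg (M.nonneg d t₁) (hδ0 t₁ s'))
            (mul_nonneg (M.nonneg d t₂) (hδ0 t₂ s'))
        · exact hδ0 t₁ s'
      · exact hδ0 _ s'
    · -- rows of positive weight are distributions
      intro u' hpos
      rw [hpu u'] at hpos
      by_cases h : u'.1 = t₁
      · rw [dred, if_pos h] at hpos
        simp only [if_pos h, if_pos hpos]
        rw [finsum_eq_sum_of_fintype, ← Finset.sum_div, Finset.sum_add_distrib,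
          ← Finset.mul_sum, ← Finset.mul_sum]
        have hcc : ∀ (t' : T), M.p d t' * (∑ s' : S, δ t' s') = M.p d t' := by
          intro t'
          by_cases hpos' : 0 < M.p d t'
          · rw [hδsum t' hpos', mul_one]
          · have h0 : M.p d t' = 0 := le_antisymm (not_lt.mp hpos') (M.nonneg d t')
            rw [h0, zero_mul]
        rw [hcc t₁, hcc t₂]
        exact div_self (ne_of_gt hpos)
      · rw [dred, if_neg h] at hpos
        simp only [if_neg h]
        exact hδ1 u'.1 hpos
    · -- interval constraints
      intro s'
      have hkey : ∑ᶠ u', (mergedMC M t₁ t₂ hne tsel).p u u' *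
          (if u'.1 = t₁ then
            (if 0 < M.p d t₁ + M.p d t₂ then
              (M.p d t₁ * δ t₁ s' + M.p d t₂ * δ t₂ s') / (M.p d t₁ + M.p d t₂)
             else δ t₁ s')
          else δ u'.1 s')
          = ∑ᶠ t', M.p d t' * δ t' s' := by
        rw [finsum_eq_sum_of_fintype, finsum_eq_sum_of_fintype]
        have e1 : ∀ u' : ↥(Uset t₂), (mergedMC M t₁ t₂ hne tsel).p u u' *
            (if u'.1 = t₁ then
              (if 0 < M.p d t₁ + M.p d t₂ then
                (M.p d t₁ * δ t₁ s' + M.p d t₂ * δ t₂ s') / (M.p d t₁ + M.p d t₂)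
               else δ t₁ s')
            else δ u'.1 s')
            = dred M t₁ t₂ d u' *
            (fun u'' : ↥(Uset t₂) => (if u''.1 = t₁ then
              (if 0 < M.p d t₁ + M.p d t₂ then
                (M.p d t₁ * δ t₁ s' + M.p d t₂ * δ t₂ s') / (M.p d t₁ + M.p d t₂)
               else δ t₁ s')
            else δ u''.1 s')) u' := fun u' => by rw [hpu u']
        rw [Finset.sum_congr rfl (fun u' _ => e1 u')]
        rw [Usum_decomp M t₁ t₂ hne d
          (fun u'' : ↥(Uset t₂) => (if u''.1 = t₁ then
              (if 0 < M.p d t₁ + M.p d t₂ then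
                (M.p d t₁ * δ t₁ s' + M.p d t₂ * δ t₂ s') / (M.p d t₁ + M.p d t₂)
               else δ t₁ s')
            else δ u''.1 s')),
          Tsum_decomp M t₁ t₂ hne d (fun t' => δ t' s')]
        have hm : ((⟨t₁, hne⟩ : ↥(Uset t₂)) : T) = t₁ := rfl
        simp only [hm, eq_self_iff_true, if_true]
        have hmterm : (M.p d t₁ + M.p d t₂) *
            (if 0 < M.p d t₁ + M.p d t₂ then
              (M.p d t₁ * δ t₁ s' + M.p d t₂ * δ t₂ s') / (M.p d t₁ + M.p d t₂)
             else δ t₁ s')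
            = M.p d t₁ * δ t₁ s' + M.p d t₂ * δ t₂ s' := by
          by_cases hD : 0 < M.p d t₁ + M.p d t₂
          · rw [if_pos hD, mul_div_cancel₀ _ (ne_of_gt hD)]
          · have h0 : M.p d t₁ + M.p d t₂ = 0 := le_antisymm (not_lt.mp hD)
              (by linarith [M.nonneg d t₁, M.nonneg d t₂])
            have hc1 : M.p d t₁ = 0 := by linarith [M.nonneg d t₁, M.nonneg d t₂]
            have hc2 : M.p d t₂ = 0 := by linarith [M.nonneg d t₁, M.nonneg d t₂]
            rw [if_neg hD, h0, hc1, hc2]; ring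
        rw [hmterm]
        have htail : ∀ t' ∈ (Finset.univ.erase t₂).erase t₁,
            M.p d t' * (if ((πmap t₁ t₂ hne t' : ↥(Uset t₂)) : T) = t₁ then
              (if 0 < M.p d t₁ + M.p d t₂ then
                (M.p d t₁ * δ t₁ s' + M.p d t₂ * δ t₂ s') / (M.p d t₁ + M.p d t₂)
               else δ t₁ s')
            else δ ((πmap t₁ t₂ hne t' : ↥(Uset t₂)) : T) s')
            = M.p d t' * δ t' s' := by
          intro t' ht'
          obtain ⟨ht1, ht2'⟩ := Finset.mem_erase.mp ht'
          have ht2 : t' ≠ t₂ := (Finset.mem_erase.mp ht2').1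
          rw [πmap_ne t₁ t₂ hne ht2]
          simp only [if_neg ht1]
        rw [Finset.sum_congr rfl htail]
      rw [hkey]
      exact hδint s'
    · -- support condition
      intro u' s' hpos
      show R u'.1 s'
      dsimp only at hpos
      by_cases h : u'.1 = t₁
      · rw [if_pos h] at hpos
        rw [h]
        by_cases hD : 0 < M.p d t₁ + M.p d t₂
        · rw [if_pos hD] at hpos
          have hnum : 0 < M.p d t₁ * δ t₁ s' + M.p d t₂ * δ t₂ s' := by
            by_contra hcon
            push_neg at hcon
            have : (M.p d t₁ * δ t₁ s' + M.p d t₂ * δ t₂ s') / (M.p d t₁ + M.p d t₂) ≤ 0 :=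
              div_nonpos_of_nonpos_of_nonneg hcon (by linarith)
            linarith
          rcases (lt_or_ge 0 (M.p d t₁ * δ t₁ s')) with hp1 | hp1
          · have hδ1' : 0 < δ t₁ s' := by
              rcases (mul_pos_iff.mp hp1) with ⟨_, hx⟩ | ⟨hx, _⟩
              · exact hx
              · linarith [M.nonneg d t₁]
            exact hδsupp t₁ s' hδ1'
          · have hp2 : 0 < M.p d t₂ * δ t₂ s' := by
              have hnn : 0 ≤ M.p d t₁ * δ t₁ s' :=
                mul_nonneg (M.nonneg d t₁) (hδ0 t₁ s')
              have : M.p d t₁ * δ t₁ s' = 0 := le_antisymm hp1 hnn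
              linarith
            have hδ2 : 0 < δ t₂ s' := by
              rcases (mul_pos_iff.mp hp2) with ⟨_, hx⟩ | ⟨hx, _⟩
              · exact hx
              · linarith [M.nonneg d t₂]
            have hR2 : R t₂ s' := hδsupp t₂ s' hδ2
            have hs' : s' = sbar := huniq t₂ s' sbar hR2 h2
            exact hs' ▸ h1
        · rw [if_neg hD] at hpos
          exact hδsupp t₁ s' hpos
      · rw [if_neg h] at hpos
        exact hδsupp u'.1 s' hpos

end Stmt14Aux

namespace Stmt14Aux
open MC

section Compare
variable {T A : Type} [Fintype T]

lemma dred_nonneg (M : MC T A) (t₁ t₂ d : T) (u' : ↥(Uset t₂)) :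
    0 ≤ dred M t₁ t₂ d u' := by
  simp only [dred]
  split
  · exact add_nonneg (M.nonneg d t₁) (M.nonneg d t₂)
  · exact M.nonneg d _

/-- Redirected dot product of row `d` with a vector on the reduced space. -/
noncomputable def rdot (M : MC T A) (t₁ t₂ d : T) (x : ↥(Uset t₂) → ℝ) : ℝ :=
  ∑ u', dred M t₁ t₂ d u' * x u'

lemma rdot_le_one (M : MC T A) (t₁ t₂ : T) (hne : t₁ ≠ t₂)
    (hMs1 : ∀ t, ∑ t' : T, M.p t t' = 1) (d : T) (x : ↥(Uset t₂) → ℝ)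
    (hx : ∀ u', x u' ≤ 1) :
    rdot M t₁ t₂ d x ≤ 1 := by
  rw [rdot]
  calc ∑ u', dred M t₁ t₂ d u' * x u' ≤ ∑ u', dred M t₁ t₂ d u' := by
        apply Finset.sum_le_sum
        intro u' _
        exact mul_le_of_le_one_right (dred_nonneg M t₁ t₂ d u') (hx u')
    _ = 1 := dred_rowsum M t₁ t₂ hne hMs1 d

lemma mergedMC_p_eq (M : MC T A) (t₁ t₂ : T) (hne : t₁ ≠ t₂) (c : T) (u u' : ↥(Uset t₂)) :
    (mergedMC M t₁ t₂ hne c).p u u' = dred M t₁ t₂ (if u.1 = t₁ then c else u.1) u' := rfl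

lemma merged_unfold (M : MC T A) (t₁ t₂ : T) (hne : t₁ ≠ t₂) [Inhabited ↥(Uset t₂)]
    (ψ : T → Prop) (c : T)
    {γ : ℝ} (hγ0 : 0 ≤ γ) (hγ1 : γ ≤ 1) (u : ↥(Uset t₂)) (hu : ¬ ψ u.1) :
    dR (mergedMC M t₁ t₂ hne c).p (fun u => ψ u.1) γ u
      = γ * rdot M t₁ t₂ (if u.1 = t₁ then c else u.1)
          (dR (mergedMC M t₁ t₂ hne c).p (fun u => ψ u.1) γ) := by
  rw [dR_unfold (mergedMC M t₁ t₂ hne c).p (fun u => ψ u.1)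
    (mergedMC M t₁ t₂ hne c).nonneg
    (fun a => le_of_eq (by rw [← finsum_eq_sum_of_fintype]
                           exact (mergedMC M t₁ t₂ hne c).sum_one a))
    hγ0 hγ1 hu, rdot]
  congr 1

lemma rdot_eq_Tsum (M : MC T A) (t₁ t₂ : T) (hne : t₁ ≠ t₂) (d : T) (w : T → ℝ)
    (hw : w t₁ = w t₂) :
    rdot M t₁ t₂ d (fun u => w u.1) = ∑ t' : T, M.p d t' * w t' := by
  rw [rdot, Usum_decomp M t₁ t₂ hne d, Tsum_decomp M t₁ t₂ hne d w]
  have h1 : ∀ t' ∈ (Finset.univ.erase t₂).erase t₁,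
      M.p d t' * w ((πmap t₁ t₂ hne t' : ↥(Uset t₂)) : T) = M.p d t' * w t' := by
    intro t' ht'
    have ht2 : t' ≠ t₂ := (Finset.mem_erase.mp ((Finset.mem_erase.mp ht').2)).1
    rw [πmap_ne t₁ t₂ hne ht2]
  rw [Finset.sum_congr rfl h1]
  show (M.p d t₁ + M.p d t₂) * w t₁ + _ = _
  rw [hw]
  ring

/-- Core of the minimum direction. -/
lemma min_aux (M : MC T A) (t₁ t₂ : T) (hne : t₁ ≠ t₂) [Inhabited T]
    (ψ : T → Prop) (hψ12 : ψ t₁ ↔ ψ t₂)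
    (hMp : ∀ a b, 0 ≤ M.p a b) (hMs1 : ∀ t, ∑ t' : T, M.p t t' = 1)
    (tsel : T) (hsel : tsel = t₁ ∨ tsel = t₂)
    (hr1 : dR M.p ψ 1 tsel ≤ dR M.p ψ 1 t₁) (hr2 : dR M.p ψ 1 tsel ≤ dR M.p ψ 1 t₂) :
    dR (mergedMC M t₁ t₂ hne tsel).p (fun u => ψ u.1) 1 (πmap t₁ t₂ hne M.s0)
      ≤ dR M.p ψ 1 M.s0 := by
  classical
  haveI : Inhabited ↥(Uset t₂) := ⟨⟨t₁, hne⟩⟩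
  have hMs : ∀ t, ∑ t' : T, M.p t t' ≤ 1 := fun t => le_of_eq (hMs1 t)
  have hψsel : ∀ t, ψ (if t = t₁ then tsel else t) ↔ ψ t := by
    intro t
    by_cases h : t = t₁
    · rw [if_pos h, h]
      rcases hsel with rfl | rfl
      · exact Iff.rfl
      · exact hψ12.symm
    · rw [if_neg h]
  have hley : ∀ u : ↥(Uset t₂), dR (mergedMC M t₁ t₂ hne tsel).p (fun u => ψ u.1) 1 u
      ≤ dR M.p ψ 1 (if u.1 = t₁ then tsel else u.1) := by
    apply dR_le (mergedMC M t₁ t₂ hne tsel).p (fun u => ψ u.1)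
      (mergedMC M t₁ t₂ hne tsel).nonneg
      (fun a => le_of_eq (by rw [← finsum_eq_sum_of_fintype]
                             exact (mergedMC M t₁ t₂ hne tsel).sum_one a))
    · intro u
      exact dR_nonneg M.p ψ hMp zero_le_one _
    · intro u hu
      have hψd : ψ (if u.1 = t₁ then tsel else u.1) := (hψsel u.1).mpr hu
      rw [dR, if_pos hψd]
    · intro u hu
      have hψd : ¬ ψ (if u.1 = t₁ then tsel else u.1) := fun h => hu ((hψsel u.1).mp h)
      set d : T := if u.1 = t₁ then tsel else u.1 with hd
      -- rewrite the sum as a redirected dot product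
      have hstep : ∑ u', (mergedMC M t₁ t₂ hne tsel).p u u'
          * dR M.p ψ 1 (if u'.1 = t₁ then tsel else u'.1)
          = rdot M t₁ t₂ d (fun u' => dR M.p ψ 1 (if u'.1 = t₁ then tsel else u'.1)) := by
        rw [rdot]
        apply Finset.sum_congr rfl
        intro u' _
        rw [mergedMC_p_eq M t₁ t₂ hne tsel u u', ← hd]
      rw [hstep]
      -- decompose
      rw [rdot, Usum_decomp M t₁ t₂ hne d]
      have hmval : ((⟨t₁, hne⟩ : ↥(Uset t₂)) : T) = t₁ := rfl
      have htail : ∀ t' ∈ (Finset.univ.erase t₂).erase t₁,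
          M.p d t' * dR M.p ψ 1
            (if ((πmap t₁ t₂ hne t' : ↥(Uset t₂)) : T) = t₁ then tsel
             else ((πmap t₁ t₂ hne t' : ↥(Uset t₂)) : T))
          = M.p d t' * dR M.p ψ 1 t' := by
        intro t' ht'
        have ht1 : t' ≠ t₁ := (Finset.mem_erase.mp ht').1
        have ht2 : t' ≠ t₂ := (Finset.mem_erase.mp ((Finset.mem_erase.mp ht').2)).1
        rw [πmap_ne t₁ t₂ hne ht2]
        simp only [if_neg ht1]
      rw [Finset.sum_congr rfl htail]
      simp only [hmval, eq_self_iff_true, if_true]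
      have hbound : (M.p d t₁ + M.p d t₂) * dR M.p ψ 1 tsel
          + ∑ t' ∈ (Finset.univ.erase t₂).erase t₁, M.p d t' * dR M.p ψ 1 t'
          ≤ ∑ t' : T, M.p d t' * dR M.p ψ 1 t' := by
        rw [Tsum_decomp M t₁ t₂ hne d (dR M.p ψ 1)]
        have e1 : M.p d t₁ * dR M.p ψ 1 tsel ≤ M.p d t₁ * dR M.p ψ 1 t₁ :=
          mul_le_mul_of_nonneg_left hr1 (hMp d t₁)
        have e2 : M.p d t₂ * dR M.p ψ 1 tsel ≤ M.p d t₂ * dR M.p ψ 1 t₂ :=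
          mul_le_mul_of_nonneg_left hr2 (hMp d t₂)
        nlinarith [e1, e2]
      calc (M.p d t₁ + M.p d t₂) * dR M.p ψ 1 tsel
          + ∑ t' ∈ (Finset.univ.erase t₂).erase t₁, M.p d t' * dR M.p ψ 1 t'
          ≤ ∑ t' : T, M.p d t' * dR M.p ψ 1 t' := hbound
        _ = dR M.p ψ 1 d := by
            rw [dR_unfold M.p ψ hMp hMs zero_le_one le_rfl hψd, one_mul]
  -- conclude at the initial state
  have := hley (πmap t₁ t₂ hne M.s0)
  by_cases h : M.s0 = t₂
  · rw [h] at this ⊢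
    rw [πmap_t₂] at this
    have hmval : ((⟨t₁, hne⟩ : ↥(Uset t₂)) : T) = t₁ := rfl
    simp only [hmval, eq_self_iff_true, if_true] at this
    calc dR (mergedMC M t₁ t₂ hne tsel).p (fun u => ψ u.1) 1 (πmap t₁ t₂ hne t₂)
        ≤ dR M.p ψ 1 tsel := by rw [πmap_t₂]; exact this
      _ ≤ dR M.p ψ 1 t₂ := hr2
  · rw [πmap_ne t₁ t₂ hne h] at this ⊢
    by_cases h1 : M.s0 = t₁
    · rw [if_pos h1] at this
      calc dR (mergedMC M t₁ t₂ hne tsel).p (fun u => ψ u.1) 1 ⟨M.s0, h⟩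
          ≤ dR M.p ψ 1 tsel := this
        _ ≤ dR M.p ψ 1 t₁ := hr1
        _ = dR M.p ψ 1 M.s0 := by rw [h1]
    · simp only [if_neg h1] at this
      exact this

/-- Minimum direction: some merged chain has no larger reach probability. -/
lemma merged_le [Inhabited T] (M : MC T A) (t₁ t₂ : T)
    (hne : t₁ ≠ t₂) (ψ : T → Prop) (hψ12 : ψ t₁ ↔ ψ t₂)
    (hMp : ∀ a b, 0 ≤ M.p a b) (hMs1 : ∀ t, ∑ t' : T, M.p t t' = 1) :
    ∃ tsel, (tsel = t₁ ∨ tsel = t₂) ∧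
      dR (mergedMC M t₁ t₂ hne tsel).p (fun u => ψ u.1) 1 (πmap t₁ t₂ hne M.s0)
        ≤ dR M.p ψ 1 M.s0 := by
  by_cases hmin : dR M.p ψ 1 t₁ ≤ dR M.p ψ 1 t₂
  · exact ⟨t₁, Or.inl rfl,
      min_aux M t₁ t₂ hne ψ hψ12 hMp hMs1 t₁ (Or.inl rfl) le_rfl hmin⟩
  · exact ⟨t₂, Or.inr rfl,
      min_aux M t₁ t₂ hne ψ hψ12 hMp hMs1 t₂ (Or.inr rfl) (le_of_not_ge hmin) le_rfl⟩

end Compare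
end Stmt14Aux

namespace Stmt14Aux
open MC Filter

section Max
variable {T A : Type} [Fintype T]

lemma Tsum_pi_eq_rdot (M : MC T A) (t₁ t₂ : T) (hne : t₁ ≠ t₂) (d : T)
    (x : ↥(Uset t₂) → ℝ) :
    ∑ t' : T, M.p d t' * x (πmap t₁ t₂ hne t') = rdot M t₁ t₂ d x := by
  rw [rdot, Usum_decomp M t₁ t₂ hne d x,
    Tsum_decomp M t₁ t₂ hne d (fun t' => x (πmap t₁ t₂ hne t')), πmap_t₁, πmap_t₂]
  ring

lemma merged_rowsum_le (M : MC T A) (t₁ t₂ : T) (hne : t₁ ≠ t₂) (c : T) :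
    ∀ u, ∑ u', (mergedMC M t₁ t₂ hne c).p u u' ≤ 1 := fun u =>
  le_of_eq (by rw [← finsum_eq_sum_of_fintype]
               exact (mergedMC M t₁ t₂ hne c).sum_one u)

/-- Value function of the merged chain. -/
noncomputable def mval (M : MC T A) (t₁ t₂ : T) (hne : t₁ ≠ t₂) (ψ : T → Prop)
    (c : T) (γ : ℝ) : ↥(Uset t₂) → ℝ :=
  dR (mergedMC M t₁ t₂ hne c).p (fun u => ψ u.1) γ

/-- Stability of the merged chain with row `c` against both candidate rows. -/
def StabP (M : MC T A) (t₁ t₂ : T) (hne : t₁ ≠ t₂) (ψ : T → Prop)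
    (c : T) (γ : ℝ) : Prop :=
  γ * rdot M t₁ t₂ t₁ (mval M t₁ t₂ hne ψ c γ) ≤ mval M t₁ t₂ hne ψ c γ ⟨t₁, hne⟩ ∧
  γ * rdot M t₁ t₂ t₂ (mval M t₁ t₂ hne ψ c γ) ≤ mval M t₁ t₂ hne ψ c γ ⟨t₁, hne⟩

variable (M : MC T A) (t₁ t₂ : T) (hne : t₁ ≠ t₂) (ψ : T → Prop)

lemma mval_nonneg (c : T) {γ : ℝ} (hγ0 : 0 ≤ γ) (u : ↥(Uset t₂)) :
    0 ≤ mval M t₁ t₂ hne ψ c γ u := by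
  haveI : Inhabited ↥(Uset t₂) := ⟨⟨t₁, hne⟩⟩
  exact dR_nonneg _ _ (mergedMC M t₁ t₂ hne c).nonneg hγ0 u

lemma mval_le_one (hMs1 : ∀ t, ∑ t' : T, M.p t t' = 1) (c : T)
    {γ : ℝ} (hγ0 : 0 ≤ γ) (hγ1 : γ ≤ 1) (u : ↥(Uset t₂)) :
    mval M t₁ t₂ hne ψ c γ u ≤ 1 := by
  haveI : Inhabited ↥(Uset t₂) := ⟨⟨t₁, hne⟩⟩
  exact dR_le_one _ _ (mergedMC M t₁ t₂ hne c).nonneg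
    (merged_rowsum_le M t₁ t₂ hne c) hγ0 hγ1 u

lemma rdot_nonneg (d : T) (x : ↥(Uset t₂) → ℝ) (hx : ∀ u, 0 ≤ x u) :
    0 ≤ rdot M t₁ t₂ d x :=
  Finset.sum_nonneg fun u' _ => mul_nonneg (dred_nonneg M t₁ t₂ d u') (hx u')

lemma stab_own (hψ12 : ψ t₁ ↔ ψ t₂) (hMs1 : ∀ t, ∑ t' : T, M.p t t' = 1)
    (c : T) {γ : ℝ} (hγ0 : 0 ≤ γ) (hγ1 : γ ≤ 1) :
    γ * rdot M t₁ t₂ c (mval M t₁ t₂ hne ψ c γ) ≤ mval M t₁ t₂ hne ψ c γ ⟨t₁, hne⟩ := by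
  haveI : Inhabited ↥(Uset t₂) := ⟨⟨t₁, hne⟩⟩
  by_cases hψm : ψ t₁
  · have hm1 : mval M t₁ t₂ hne ψ c γ ⟨t₁, hne⟩ = 1 := by
      rw [mval, dR, if_pos]; exact hψm
    rw [hm1]
    have h1 : rdot M t₁ t₂ c (mval M t₁ t₂ hne ψ c γ) ≤ 1 :=
      rdot_le_one M t₁ t₂ hne hMs1 c _ (mval_le_one M t₁ t₂ hne ψ hMs1 c hγ0 hγ1)
    have h0 : 0 ≤ rdot M t₁ t₂ c (mval M t₁ t₂ hne ψ c γ) :=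
      rdot_nonneg M t₁ t₂ c _ (mval_nonneg M t₁ t₂ hne ψ c hγ0)
    nlinarith
  · have := merged_unfold M t₁ t₂ hne ψ c hγ0 hγ1 ⟨t₁, hne⟩ hψm
    simp only [eq_self_iff_true, if_true] at this
    rw [mval]
    rw [this]

lemma stab_exists (hψ12 : ψ t₁ ↔ ψ t₂) (hMs1 : ∀ t, ∑ t' : T, M.p t t' = 1)
    {γ : ℝ} (hγ0 : 0 ≤ γ) (hγ1 : γ < 1) :
    StabP M t₁ t₂ hne ψ t₁ γ ∨ StabP M t₁ t₂ hne ψ t₂ γ := by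
  classical
  haveI : Inhabited ↥(Uset t₂) := ⟨⟨t₁, hne⟩⟩
  by_contra hcon
  push_neg at hcon
  obtain ⟨hf1, hf2⟩ := hcon
  have hγ1' : γ ≤ 1 := le_of_lt hγ1
  -- the own-row inequalities always hold, so the failures are against the other row
  have hown1 := stab_own M t₁ t₂ hne ψ hψ12 hMs1 t₁ hγ0 hγ1'
  have hown2 := stab_own M t₁ t₂ hne ψ hψ12 hMs1 t₂ hγ0 hγ1'
  have hfail1 : mval M t₁ t₂ hne ψ t₁ γ ⟨t₁, hne⟩
      < γ * rdot M t₁ t₂ t₂ (mval M t₁ t₂ hne ψ t₁ γ) := by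
    by_contra h
    exact hf1 ⟨hown1, not_lt.mp h⟩
  have hfail2 : mval M t₁ t₂ hne ψ t₂ γ ⟨t₁, hne⟩
      < γ * rdot M t₁ t₂ t₁ (mval M t₁ t₂ hne ψ t₂ γ) := by
    by_contra h
    exact hf2 ⟨not_lt.mp h, hown2⟩
  -- comparison both ways
  have hcomp : ∀ c c' : T, (c = t₁ ∨ c = t₂) → (c' = t₁ ∨ c' = t₂) →
      mval M t₁ t₂ hne ψ c γ ⟨t₁, hne⟩
        < γ * rdot M t₁ t₂ c' (mval M t₁ t₂ hne ψ c γ) →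
      ∀ u, mval M t₁ t₂ hne ψ c γ u ≤ mval M t₁ t₂ hne ψ c' γ u := by
    intro c c' hc hc' hfail
    apply sub_le_fixed (mergedMC M t₁ t₂ hne c').p (fun u => ψ u.1)
      (mergedMC M t₁ t₂ hne c').nonneg (merged_rowsum_le M t₁ t₂ hne c') hγ0 hγ1
    · intro u _
      exact mval_le_one M t₁ t₂ hne ψ hMs1 c hγ0 hγ1' u
    · intro u hu
      have hsum : ∑ u', (mergedMC M t₁ t₂ hne c').p u u' * mval M t₁ t₂ hne ψ c γ u'
          = rdot M t₁ t₂ (if u.1 = t₁ then c' else u.1) (mval M t₁ t₂ hne ψ c γ) := by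
        rw [rdot]
        apply Finset.sum_congr rfl
        intro u' _
        rw [mergedMC_p_eq]
      rw [hsum]
      by_cases hu1 : u.1 = t₁
      · have hum : u = ⟨t₁, hne⟩ := Subtype.ext hu1
        rw [if_pos hu1, hum]
        exact le_of_lt hfail
      · rw [if_neg hu1]
        have := merged_unfold M t₁ t₂ hne ψ c hγ0 hγ1' u hu
        rw [if_neg hu1] at this
        exact le_of_eq this
    · intro u hu
      rw [mval, dR, if_pos]; exact hu
    · intro u hu
      apply le_of_eq
      exact (dR_unfold (mergedMC M t₁ t₂ hne c').p (fun u => ψ u.1)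
        (mergedMC M t₁ t₂ hne c').nonneg (merged_rowsum_le M t₁ t₂ hne c')
        hγ0 hγ1' hu).symm
  have hab := hcomp t₁ t₂ (Or.inl rfl) (Or.inr rfl) hfail1
  have hba := hcomp t₂ t₁ (Or.inr rfl) (Or.inl rfl) hfail2
  have hEq : mval M t₁ t₂ hne ψ t₁ γ = mval M t₁ t₂ hne ψ t₂ γ :=
    funext fun u => le_antisymm (hab u) (hba u)
  rw [hEq] at hfail1
  linarith [hown2, hfail1]

/-- Maximum direction: some merged chain has no smaller reach probability. -/
lemma le_merged [Inhabited T] (hψ12 : ψ t₁ ↔ ψ t₂)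
    (hMp : ∀ a b, 0 ≤ M.p a b) (hMs1 : ∀ t, ∑ t' : T, M.p t t' = 1) :
    ∃ tsel, (tsel = t₁ ∨ tsel = t₂) ∧
      dR M.p ψ 1 M.s0
        ≤ dR (mergedMC M t₁ t₂ hne tsel).p (fun u => ψ u.1) 1 (πmap t₁ t₂ hne M.s0) := by
  classical
  haveI : Inhabited ↥(Uset t₂) := ⟨⟨t₁, hne⟩⟩
  have hMs : ∀ t, ∑ t' : T, M.p t t' ≤ 1 := fun t => le_of_eq (hMs1 t)
  have hstab : ∀ k : ℕ, StabP M t₁ t₂ hne ψ t₁ (γseq k) ∨ StabP M t₁ t₂ hne ψ t₂ (γseq k) :=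
    fun k => stab_exists M t₁ t₂ hne ψ hψ12 hMs1 (γseq_nonneg k) (γseq_lt_one k)
  obtain ⟨c, hcsel, hfreq⟩ : ∃ c, (c = t₁ ∨ c = t₂) ∧
      ∃ᶠ k in atTop, StabP M t₁ t₂ hne ψ c (γseq k) := by
    by_cases hfa : ∃ᶠ k in atTop, StabP M t₁ t₂ hne ψ t₁ (γseq k)
    · exact ⟨t₁, Or.inl rfl, hfa⟩
    · refine ⟨t₂, Or.inr rfl, ?_⟩
      have hev := Filter.not_frequently.mp hfa
      exact (hev.mono (fun k hk => (hstab k).resolve_left hk)).frequently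
  -- limits
  have hlimv : ∀ u : ↥(Uset t₂), Tendsto (fun k => mval M t₁ t₂ hne ψ c (γseq k) u)
      atTop (nhds (mval M t₁ t₂ hne ψ c 1 u)) := fun u =>
    dR_tendsto (mergedMC M t₁ t₂ hne c).p (fun u => ψ u.1)
      (mergedMC M t₁ t₂ hne c).nonneg (merged_rowsum_le M t₁ t₂ hne c) u
  have hdlim : ∀ d : T, Tendsto (fun k => γseq k * rdot M t₁ t₂ d (mval M t₁ t₂ hne ψ c (γseq k)))
      atTop (nhds (rdot M t₁ t₂ d (mval M t₁ t₂ hne ψ c 1))) := by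
    intro d
    have h1 : Tendsto (fun k => rdot M t₁ t₂ d (mval M t₁ t₂ hne ψ c (γseq k)))
        atTop (nhds (rdot M t₁ t₂ d (mval M t₁ t₂ hne ψ c 1))) := by
      simp only [rdot]
      exact tendsto_finset_sum _ (fun u' _ => (hlimv u').const_mul _)
    have := γseq_tendsto.mul h1
    simpa using this
  have hstab1 : rdot M t₁ t₂ t₁ (mval M t₁ t₂ hne ψ c 1) ≤ mval M t₁ t₂ hne ψ c 1 ⟨t₁, hne⟩ :=
    freq_le (hdlim t₁) (hlimv ⟨t₁, hne⟩) (hfreq.mono fun k hk => hk.1)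
  have hstab2 : rdot M t₁ t₂ t₂ (mval M t₁ t₂ hne ψ c 1) ≤ mval M t₁ t₂ hne ψ c 1 ⟨t₁, hne⟩ :=
    freq_le (hdlim t₂) (hlimv ⟨t₁, hne⟩) (hfreq.mono fun k hk => hk.2)
  refine ⟨c, hcsel, ?_⟩
  have hkey : ∀ t, dR M.p ψ 1 t ≤ mval M t₁ t₂ hne ψ c 1 (πmap t₁ t₂ hne t) := by
    apply dR_le M.p ψ hMp hMs
    · intro t
      exact mval_nonneg M t₁ t₂ hne ψ c zero_le_one _
    · intro t ht
      have hψπ : ψ ((πmap t₁ t₂ hne t).1) := by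
        by_cases h : t = t₂
        · rw [h, πmap_t₂]
          exact hψ12.mpr (h ▸ ht)
        · rw [πmap_ne t₁ t₂ hne h]
          exact ht
      rw [mval, dR, if_pos hψπ]
    · intro t ht
      have hLHS : ∑ t', M.p t t' * mval M t₁ t₂ hne ψ c 1 (πmap t₁ t₂ hne t')
          = rdot M t₁ t₂ t (mval M t₁ t₂ hne ψ c 1) :=
        Tsum_pi_eq_rdot M t₁ t₂ hne t _
      rw [hLHS]
      by_cases h1 : t = t₁
      · subst h1
        rw [πmap_t₁]
        exact hstab1
      by_cases h2 : t = t₂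
      · subst h2
        rw [πmap_t₂]
        exact hstab2
      · rw [πmap_ne t₁ t₂ hne h2]
        apply le_of_eq
        have := merged_unfold M t₁ t₂ hne ψ c zero_le_one le_rfl ⟨t, h2⟩ ht
        rw [if_neg h1, one_mul] at this
        exact this.symm
  exact hkey M.s0

end Max
end Stmt14Aux

namespace Stmt14Aux
open MC

lemma reach_eq_dR {σ : Type} [Fintype σ] (p : σ → σ → ℝ) (ψ : σ → Prop) (s : σ) :
    MC.reachProb p ψ s = dR p ψ 1 s := by
  rw [MC.reachProb, dR]
  by_cases hψ : ψ s
  · rw [if_pos hψ, if_pos hψ]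
  · rw [if_neg hψ, if_neg hψ, MC.untilProb, dU]
    exact tsum_congr fun l => by rw [one_pow, one_mul]

end Stmt14Aux

open Stmt14Aux

/-- state merging.  If `M ⊨ᵃ I` with degree 1 and the satisfaction
relation is not a partial bijection (some `s̄` is related to two distinct states),
then there are at-every-step implementations `M₁`, `M₂` of `I` on strict subsets of the
states of `M` with `P^{M₁}(◊α) ≤ P^{M}(◊α)` and `P^{M₂}(◊α) ≥ P^{M}(◊α)`. -/
theorem stmt14 {T S A : Type} [Finite T] [Finite S]
    (M : MC T A) (I : IMC S A) (α : Set A) (R : T → S → Prop)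
    (hsat : IsSatRel M I R)
    (hdeg1 : ∀ t, {s | R t s}.ncard ≤ 1)
    (sbar : S) (t₁ t₂ : T) (hne : t₁ ≠ t₂) (h1 : R t₁ sbar) (h2 : R t₂ sbar) :
    (∃ U : Set T, U ⊂ Set.univ ∧ ∃ M₁ : MC U A,
      SatA M₁ I ∧ M₁.Preach α ≤ M.Preach α) ∧
    (∃ U : Set T, U ⊂ Set.univ ∧ ∃ M₂ : MC U A,
      SatA M₂ I ∧ M.Preach α ≤ M₂.Preach α) := by
  classical
  haveI : Fintype T := Fintype.ofFinite T
  haveI : Inhabited T := ⟨t₁⟩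
  haveI : Inhabited ↥(Uset t₂) := ⟨⟨t₁, hne⟩⟩
  have hV12 : M.V t₁ = M.V t₂ := by
    have a := (hsat.2 t₁ sbar h1).1
    have b := (hsat.2 t₂ sbar h2).1
    rw [a, b]
  have hψ12 : (fun t => M.V t = α) t₁ ↔ (fun t => M.V t = α) t₂ := by
    simp only
    rw [hV12]
  have hMp : ∀ a b, 0 ≤ M.p a b := M.nonneg
  have hMs1 : ∀ t, ∑ t' : T, M.p t t' = 1 := fun t => by
    rw [← finsum_eq_sum_of_fintype]; exact M.sum_one t
  have hUss : Uset t₂ ⊂ Set.univ := by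
    rw [Set.ssubset_univ_iff]
    intro hcon
    have ht : t₂ ∈ Uset t₂ := hcon ▸ Set.mem_univ t₂
    exact ht rfl
  have hPM : M.Preach α = dR M.p (fun t => M.V t = α) 1 M.s0 := by
    rw [MC.Preach, reach_eq_dR]
  have hPQ : ∀ tsel, (mergedMC M t₁ t₂ hne tsel).Preach α
      = dR (mergedMC M t₁ t₂ hne tsel).p
          (fun u : ↥(Uset t₂) => M.V u.1 = α) 1 (πmap t₁ t₂ hne M.s0) := by
    intro tsel
    rw [MC.Preach, reach_eq_dR]
    rfl
  constructor
  · obtain ⟨tsel, hsel, hle⟩ := merged_le M t₁ t₂ hne (fun t => M.V t = α) hψ12 hMp hMs1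
    refine ⟨Uset t₂, hUss, mergedMC M t₁ t₂ hne tsel,
      ⟨fun u s => R u.1 s, merged_sat M I R hsat hdeg1 sbar t₁ t₂ hne h1 h2 tsel hsel⟩, ?_⟩
    rw [hPM, hPQ tsel]
    exact hle
  · obtain ⟨tsel, hsel, hle⟩ := le_merged M t₁ t₂ hne (fun t => M.V t = α) hψ12 hMp hMs1
    refine ⟨Uset t₂, hUss, mergedMC M t₁ t₂ hne tsel,
      ⟨fun u s => R u.1 s, merged_sat M I R hsat hdeg1 sbar t₁ t₂ hne h1 h2 tsel hsel⟩, ?_⟩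
    rw [hPM, hPQ tsel]
    exact hle
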